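/- Let G be a strongly connected Eulerian digraph. Then G has the natural Riemann–Roch property, i.e., dist(x) − dist(d⁺ − x) = |E(G)|/2 − deg(x) holds for every chip-distribution x, if and only if G is bidirected, i.e., d⃗(u,v) = d⃗(v,u) for every pair of vertices u, v. -/

import Mathlib

open Finset

variable {V : Type} [Fintype V] [DecidableEq V]

/-- The outdegree of a vertex `v` in the multidigraph with multiplicity function `m`
(`m u v` is the number of directed edges from `u` to `v`). -/
def outdeg (m : V → V → ℕ) (v : V) : ℤ := ∑ u, (m v u : ℤ)

/-- The indegree of a vertex. -/
def indeg (m : V → V → ℕ) (v : V) : ℤ := ∑ u, (m u v : ℤ)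

/-- The digraph is loopless. -/
def Loopless (m : V → V → ℕ) : Prop := ∀ v, m v v = 0

/-- The digraph is strongly connected: every vertex reaches every vertex on a directed path. -/
def StronglyConnected (m : V → V → ℕ) : Prop :=
  ∀ u v : V, Relation.ReflTransGen (fun a b => 0 < m a b) u v

/-- Firing vertex `v` in chip-distribution `x`: `v` sends a chip along each outgoing edge. -/
def fire (m : V → V → ℕ) (x : V → ℤ) (v : V) : V → ℤ :=
  fun u => x u + (m v u : ℤ) - (if u = v then outdeg m v else 0)

/-- The degree (total number of chips) of a chip-distribution / divisor. -/
def degSum (x : V → ℤ) : ℤ := ∑ v, x v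

/-- The state of the chip-firing game after `n` steps, starting from `x` and
firing the vertices `s 0, s 1, …` in this order. -/
def gameState (m : V → V → ℕ) (x : V → ℤ) (s : ℕ → V) : ℕ → (V → ℤ)
  | 0 => x
  | n + 1 => fire m (gameState m x s n) (s n)

/-- `s` encodes an infinite legal chip-firing game starting from `x`:
at each step the fired vertex is active. -/
def InfGame (m : V → V → ℕ) (x : V → ℤ) (s : ℕ → V) : Prop :=
  ∀ n, outdeg m (s n) ≤ gameState m x s n (s n)

/-- A chip-distribution is terminating if no infinite legal game starts from it. -/
def Terminating (m : V → V → ℕ) (x : V → ℤ) : Prop :=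
  ¬ ∃ s : ℕ → V, InfGame m x s

/-- The Laplacian of the digraph applied to `z`. -/
def lap (m : V → V → ℕ) (z : V → ℤ) : V → ℤ :=
  fun u => (∑ v, (m v u : ℤ) * z v) - outdeg m u * z u

/-- Linear equivalence: `x ∼ y` iff `x = y + L z` for some integer vector `z`. -/
def LinEquiv (m : V → V → ℕ) (x y : V → ℤ) : Prop :=
  ∃ z : V → ℤ, x = y + lap m z

/-- The distance of `x` from the non-terminating distributions:
the minimum degree of a nonnegative `y` such that `x + y` is non-terminating. -/
noncomputable def chipDist (m : V → V → ℕ) (x : V → ℤ) : ℕ :=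
  sInf {n : ℕ | ∃ y : V → ℤ, 0 ≤ y ∧ degSum y = (n : ℤ) ∧ ¬ Terminating m (x + y)}

set_option linter.unusedSectionVars false
namespace RRAux

variable (m : V → V → ℕ)

/-- state after firing a list of vertices in order -/
def applyList (w : V → ℤ) (l : List V) : V → ℤ := l.foldl (fire m) w

/-- the list is a legal firing sequence from `w` -/
def LegalList : (V → ℤ) → List V → Prop
  | _, [] => True
  | w, v :: t => outdeg m v ≤ w v ∧ LegalList (fire m w v) t

def recvSum (l : List V) (u : V) : ℤ := (l.map fun v => (m v u : ℤ)).sum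

def prevList : List V → V → List V
  | [], _ => []
  | a :: t, v => if a = v then [] else a :: prevList t v

def cList (l : List V) (v : V) : ℤ := outdeg m v - recvSum m (prevList l v) v

@[simp] lemma applyList_nil (w : V → ℤ) : applyList m w [] = w := rfl
@[simp] lemma applyList_cons (w : V → ℤ) (a : V) (t : List V) :
    applyList m w (a :: t) = applyList m (fire m w a) t := rfl
lemma applyList_append (w : V → ℤ) (l1 l2 : List V) :
    applyList m w (l1 ++ l2) = applyList m (applyList m w l1) l2 :=
  List.foldl_append

@[simp] lemma recvSum_nil (u : V) : recvSum m [] u = 0 := rfl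
@[simp] lemma recvSum_cons (a : V) (t : List V) (u : V) :
    recvSum m (a :: t) u = (m a u : ℤ) + recvSum m t u := by
  simp [recvSum]
lemma recvSum_nonneg (l : List V) (u : V) : 0 ≤ recvSum m l u := by
  induction l with
  | nil => simp
  | cons a t ih => simp only [recvSum_cons]; positivity

lemma recvSum_append (l1 l2 : List V) (u : V) :
    recvSum m (l1 ++ l2) u = recvSum m l1 u + recvSum m l2 u := by
  simp [recvSum]

lemma recvSum_reverse (l : List V) (u : V) :
    recvSum m l.reverse u = recvSum m l u := by
  simp [recvSum, List.sum_reverse]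

lemma fire_apply_ne (w : V → ℤ) (v u : V) (h : u ≠ v) :
    fire m w v u = w u + (m v u : ℤ) := by simp [fire, h]

lemma fire_apply_self (hloop : Loopless m) (w : V → ℤ) (v : V) :
    fire m w v v = w v - outdeg m v := by simp [fire, hloop v]

/-- chips of an unfired vertex after a play -/
lemma applyList_not_mem (w : V → ℤ) (l : List V) (u : V) (h : u ∉ l) :
    applyList m w l u = w u + recvSum m l u := by
  induction l generalizing w with
  | nil => simp
  | cons a t ih =>
    have hne : u ≠ a := fun he => h (he ▸ List.mem_cons_self)
    rw [applyList_cons, ih _ (fun hm => h (List.mem_cons_of_mem a hm)),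
      fire_apply_ne m w a u hne, recvSum_cons]
    ring

/-- chips of a once-fired vertex after a nodup play -/
lemma applyList_mem (hloop : Loopless m) (w : V → ℤ) (l : List V) (u : V)
    (hn : l.Nodup) (h : u ∈ l) :
    applyList m w l u = w u + recvSum m l u - outdeg m u := by
  induction l generalizing w with
  | nil => simp at h
  | cons a t ih =>
    rcases List.mem_cons.1 h with rfl | hmem
    · rw [applyList_cons, applyList_not_mem m _ t u (List.nodup_cons.1 hn).1,
        fire_apply_self m hloop, recvSum_cons, hloop]
      push_cast; ring
    · have hne : u ≠ a := by
        rintro rfl; exact (List.nodup_cons.1 hn).1 hmem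
      rw [applyList_cons, ih _ (List.nodup_cons.1 hn).2 hmem,
        fire_apply_ne m w a u hne, recvSum_cons]
      ring

lemma legalList_append (w : V → ℤ) (l1 l2 : List V) :
    LegalList m w (l1 ++ l2) ↔ LegalList m w l1 ∧ LegalList m (applyList m w l1) l2 := by
  induction l1 generalizing w with
  | nil => simp [LegalList]
  | cons a t ih => simp [LegalList, ih, and_assoc]

/-- a fired vertex in a legal nodup play ends with nonnegative chips -/
lemma applyList_mem_nonneg (hloop : Loopless m) (w : V → ℤ) (l : List V) (u : V)
    (hleg : LegalList m w l) (hn : l.Nodup) (h : u ∈ l) :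
    0 ≤ applyList m w l u := by
  induction l generalizing w with
  | nil => simp at h
  | cons a t ih =>
    rcases List.mem_cons.1 h with rfl | hmem
    · rw [applyList_cons, applyList_not_mem m _ t u (List.nodup_cons.1 hn).1,
        fire_apply_self m hloop]
      have := hleg.1
      have := recvSum_nonneg m t u
      omega
    · exact ih _ hleg.2 (List.nodup_cons.1 hn).2 hmem

@[simp] lemma prevList_nil (v : V) : prevList ([] : List V) v = [] := rfl
lemma prevList_cons_self (v : V) (t : List V) : prevList (v :: t) v = [] := by
  simp [prevList]
lemma prevList_cons_ne (a v : V) (t : List V) (h : a ≠ v) :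
    prevList (a :: t) v = a :: prevList t v := by
  simp [prevList, h]

lemma prevList_append (p q : List V) (v : V) (h : v ∉ p) :
    prevList (p ++ v :: q) v = p := by
  induction p with
  | nil => simpa using prevList_cons_self v q
  | cons a t ih =>
    have ha : a ≠ v := by rintro rfl; exact h (List.mem_cons_self)
    rw [List.cons_append, prevList_cons_ne _ _ _ ha, ih (fun hm => h (List.mem_cons_of_mem a hm))]

lemma cList_cons_self (v : V) (t : List V) : cList m (v :: t) v = outdeg m v := by
  simp [cList, prevList_cons_self]
lemma cList_cons_ne (a v : V) (t : List V) (h : a ≠ v) :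
    cList m (a :: t) v = cList m t v - (m a v : ℤ) := by
  rw [cList, prevList_cons_ne _ _ _ h, recvSum_cons, cList]; ring

/-- legality implies chips dominate the list configuration -/
lemma cList_le_of_legal (w : V → ℤ) (l : List V) (v : V)
    (hleg : LegalList m w l) (hn : l.Nodup) (hv : v ∈ l) :
    cList m l v ≤ w v := by
  induction l generalizing w with
  | nil => simp at hv
  | cons a t ih =>
    rcases List.mem_cons.1 hv with rfl | hmem
    · rw [cList_cons_self]; exact hleg.1
    · have ha : a ≠ v := by rintro rfl; exact (List.nodup_cons.1 hn).1 hmem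
      have := ih (fire m w a) hleg.2 (List.nodup_cons.1 hn).2 hmem
      rw [fire_apply_ne m w a v (Ne.symm ha)] at this
      rw [cList_cons_ne m a v t ha]
      omega

/-- domination implies legality -/
lemma legal_of_cList_le (w : V → ℤ) (l : List V)
    (hn : l.Nodup) (h : ∀ v ∈ l, cList m l v ≤ w v) : LegalList m w l := by
  induction l generalizing w with
  | nil => trivial
  | cons a t ih =>
    constructor
    · have := h a (List.mem_cons_self); rwa [cList_cons_self] at this
    · refine ih (fire m w a) (List.nodup_cons.1 hn).2 (fun v hv => ?_)
      have ha : a ≠ v := by rintro rfl; exact (List.nodup_cons.1 hn).1 hv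
      have := h v (List.mem_cons_of_mem a hv)
      rw [cList_cons_ne m a v t ha] at this
      rw [fire_apply_ne m w a v (Ne.symm ha)]
      omega

lemma list_sum_eq_finset_sum (l : List V) (hn : l.Nodup) (f : V → ℤ) :
    (l.map f).sum = ∑ v ∈ l.toFinset, f v := by
  induction l with
  | nil => simp
  | cons a t ih =>
    rw [List.map_cons, List.sum_cons, List.toFinset_cons,
      Finset.sum_insert (by simpa using (List.nodup_cons.1 hn).1), ih (List.nodup_cons.1 hn).2]

lemma recvSum_full (l : List V) (hn : l.Nodup) (hf : ∀ v : V, v ∈ l) (u : V) :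
    recvSum m l u = indeg m u := by
  rw [recvSum, list_sum_eq_finset_sum _ hn]
  have : l.toFinset = Finset.univ := by
    apply Finset.eq_univ_of_forall; intro v; simpa using hf v
  rw [this]; rfl

/-- full round returns to start (Eulerian) -/
lemma applyList_full_round (hloop : Loopless m) (heul : ∀ v, outdeg m v = indeg m v)
    (w : V → ℤ) (l : List V) (hn : l.Nodup) (hf : ∀ v : V, v ∈ l) :
    applyList m w l = w := by
  funext u
  rw [applyList_mem m hloop w l u hn (hf u), recvSum_full m l hn hf, ← heul u]
  ring

/-- Eulerian: a fired vertex loses exactly the cut to the unfired part -/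
lemma applyList_mem_eulerian (hloop : Loopless m) (heul : ∀ v, outdeg m v = indeg m v)
    (w : V → ℤ) (l : List V) (u : V) (hn : l.Nodup) (h : u ∈ l) :
    applyList m w l u = w u - ∑ v ∈ Finset.univ \ l.toFinset, (m v u : ℤ) := by
  rw [applyList_mem m hloop w l u hn h, heul u]
  have : indeg m u = recvSum m l u + ∑ v ∈ Finset.univ \ l.toFinset, (m v u : ℤ) := by
    rw [recvSum, list_sum_eq_finset_sum _ hn]
    rw [← Finset.sum_union (Finset.disjoint_sdiff)]
    rw [Finset.union_sdiff_of_subset (Finset.subset_univ _)]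
    rfl
  omega

lemma applyList_mem_le (hloop : Loopless m) (heul : ∀ v, outdeg m v = indeg m v)
    (w : V → ℤ) (l : List V) (u : V) (hn : l.Nodup) (h : u ∈ l) :
    applyList m w l u ≤ w u := by
  rw [applyList_mem_eulerian m hloop heul w l u hn h]
  have : (0:ℤ) ≤ ∑ v ∈ Finset.univ \ l.toFinset, (m v u : ℤ) :=
    Finset.sum_nonneg (fun v _ => by positivity)
  omega


-- lap machinery
lemma lap_add (z1 z2 : V → ℤ) : lap m (z1 + z2) = lap m z1 + lap m z2 := by
  funext u
  simp only [lap, Pi.add_apply, mul_add, Finset.sum_add_distrib]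
  ring

lemma lap_neg (z : V → ℤ) : lap m (-z) = - lap m z := by
  funext u
  simp only [lap, Pi.neg_apply, mul_neg, Finset.sum_neg_distrib]
  ring

lemma sum_lap (z : V → ℤ) : ∑ u, lap m z u = 0 := by
  simp only [lap, Finset.sum_sub_distrib]
  rw [Finset.sum_comm, sub_eq_zero]
  simp only [outdeg, Finset.sum_mul]

lemma lap_shift (heul : ∀ v, outdeg m v = indeg m v) (z : V → ℤ) (k : ℤ) :
    lap m (fun v => z v + k) = lap m z := by
  funext u
  simp only [lap, mul_add, Finset.sum_add_distrib, ← Finset.sum_mul]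
  have : (∑ v, (m v u : ℤ)) = outdeg m u := (heul u).symm
  rw [this]
  ring

lemma fire_eq_add_lap (w : V → ℤ) (v : V) :
    fire m w v = w + lap m (fun t => if t = v then 1 else 0) := by
  funext u
  simp only [fire, lap, Pi.add_apply, mul_ite, mul_one, mul_zero,
    Finset.sum_ite_eq' Finset.univ v (fun t => (m t u : ℤ)), Finset.mem_univ, if_true]
  by_cases h : u = v <;> simp [h] <;> ring

lemma applyList_eq_add_lap (w : V → ℤ) (l : List V) :
    applyList m w l = w + lap m (fun v => (l.count v : ℤ)) := by
  induction l generalizing w with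
  | nil =>
    funext u; simp [lap]
  | cons a t ih =>
    rw [applyList_cons, ih, fire_eq_add_lap]
    have : (fun v => ((a :: t).count v : ℤ)) =
        (fun t' => if t' = a then (1:ℤ) else 0) + (fun v => (t.count v : ℤ)) := by
      funext v
      simp only [List.count_cons, Pi.add_apply]
      by_cases h : v = a
      · simp [h]; ring
      · have h2 : ¬ a = v := fun he => h he.symm
        simp [h, h2]
    rw [this, lap_add]
    funext u; simp [Pi.add_apply]; ring

lemma getElem_not_mem_take (l : List V) (hn : l.Nodup) (i : ℕ) (h : i < l.length) :
    l[i] ∉ l.take i := by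
  intro hmem
  have hd : l = l.take i ++ l.drop i := (List.take_append_drop i l).symm
  rw [hd] at hn
  have hdis := (List.nodup_append.1 hn).2.2
  exact hdis _ hmem _ (by rw [List.drop_eq_getElem_cons h]; exact List.mem_cons_self) rfl

lemma prevList_take (l : List V) (hn : l.Nodup) (i : ℕ) (h : i < l.length) :
    prevList l l[i] = l.take i := by
  have hdecomp : l = l.take i ++ l[i] :: l.drop (i+1) := by
    conv_lhs => rw [← List.take_append_drop i l, List.drop_eq_getElem_cons h]
  rw [show prevList l l[i] = prevList (l.take i ++ l[i] :: l.drop (i+1)) l[i] from by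
    rw [← hdecomp]]
  exact prevList_append _ _ _ (getElem_not_mem_take l hn i h)

lemma nonterm_of_cList_le [Nonempty V] (hloop : Loopless m)
    (heul : ∀ v, outdeg m v = indeg m v) (w : V → ℤ) (l : List V)
    (hn : l.Nodup) (hf : ∀ v : V, v ∈ l) (hw : ∀ v, cList m l v ≤ w v) :
    ¬ Terminating m w := by
  intro ht
  apply ht
  have hNpos : 0 < l.length :=
    List.length_pos_iff.2 (fun he => by simpa [he] using hf (Classical.arbitrary V))
  refine ⟨fun n => l[n % l.length]'(Nat.mod_lt n hNpos), ?_⟩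
  have hstate : ∀ n, gameState m w (fun n => l[n % l.length]'(Nat.mod_lt n hNpos)) n
      = applyList m w (l.take (n % l.length)) := by
    intro n
    induction n with
    | zero => simp [gameState]
    | succ n ih =>
      set N := l.length with hN
      have hr : n % N < N := Nat.mod_lt n hNpos
      show fire m _ _ = _
      rw [ih]
      have hstep : fire m (applyList m w (l.take (n % N))) (l[n % N]'hr)
          = applyList m w (l.take (n % N) ++ [l[n % N]'hr]) := by
        rw [applyList_append]; rfl
      have htake : l.take (n % N) ++ [l[n % N]'hr] = l.take (n % N + 1) := by
        rw [List.take_succ, List.getElem?_eq_getElem hr]; rfl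
      rw [hstep, htake]
      rcases Nat.lt_or_ge (n % N + 1) N with hlt | hge
      · have : (n + 1) % N = n % N + 1 := by
          have hdm := Nat.div_add_mod n N
          have : n + 1 = (n % N + 1) + N * (n / N) := by omega
          rw [this, Nat.add_mul_mod_self_left, Nat.mod_eq_of_lt hlt]
        rw [this]
      · have heq : n % N + 1 = N := by omega
        have h2 : (n + 1) % N = 0 := by
          have hdm := Nat.div_add_mod n N
          have : n + 1 = N * (n / N + 1) := by rw [Nat.mul_succ]; omega
          rw [this, Nat.mul_mod_right]
        rw [heq, h2, hN, List.take_length]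
        rw [applyList_full_round m hloop heul w l hn hf]
        simp
  intro n
  rw [hstate n]
  show outdeg m (l[n % l.length]'(Nat.mod_lt n hNpos)) ≤ _
  have hr : n % l.length < l.length := Nat.mod_lt n hNpos
  have hnm : (l[n % l.length]'hr) ∉ l.take (n % l.length) := getElem_not_mem_take l hn _ hr
  rw [applyList_not_mem m w _ _ hnm]
  have := hw (l[n % l.length]'hr)
  rw [cList, prevList_take l hn _ hr] at this
  omega

lemma lap_zero : lap m (fun _ => (0:ℤ)) = fun _ => 0 := by
  funext u; simp [lap]

lemma lap_single_apply (w0 u : V) :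
    lap m (fun t => if t = w0 then (1:ℤ) else 0) u
      = (m w0 u : ℤ) - (if u = w0 then outdeg m w0 else 0) := by
  have := congrFun (fire_eq_add_lap m (fun _ => (0:ℤ)) w0) u
  simp only [fire, Pi.add_apply] at this
  omega

lemma lap_single_nonneg (w0 u : V) (h : u ≠ w0) :
    0 ≤ lap m (fun t => if t = w0 then (1:ℤ) else 0) u := by
  rw [lap_single_apply, if_neg h]; omega

lemma fire_add_const (x c : V → ℤ) (v : V) :
    fire m (x + c) v = fire m x v + c := by
  funext u; simp [fire]; ring

lemma gameState_add_const (x c : V → ℤ) (s : ℕ → V) (n : ℕ) :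
    gameState m (x + c) s n = gameState m x s n + c := by
  induction n with
  | zero => rfl
  | succ n ih => show fire m _ _ = _; rw [ih, fire_add_const]; rfl

lemma nonterm_add_lap_single (x : V → ℤ) (w0 : V) (h : ¬ Terminating m x) :
    ¬ Terminating m (x + lap m (fun t => if t = w0 then (1:ℤ) else 0)) := by
  rw [Terminating, not_not] at h ⊢
  obtain ⟨s, hs⟩ := h
  set D : V → ℤ := lap m (fun t => if t = w0 then (1:ℤ) else 0) with hD
  by_cases hT : ∃ n, s n = w0
  · set T := Nat.find hT with hTdef
    have hsT : s T = w0 := Nat.find_spec hT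
    refine ⟨fun n => if n < T then s n else s (n+1), ?_⟩
    have hfireT : gameState m x s (T+1) = gameState m x s T + D := by
      show fire m _ _ = _
      rw [hsT, fire_eq_add_lap]
    have hclaim : ∀ n, gameState m (x + D) (fun n => if n < T then s n else s (n+1)) n
        = if n < T then gameState m x s n + D else gameState m x s (n+1) := by
      intro n
      induction n with
      | zero =>
        by_cases h0 : 0 < T
        · simp [gameState, h0]
        · have hT0 : T = 0 := by omega
          simp only [h0, if_false]
          show x + D = gameState m x s 1
          rw [show (1:ℕ) = T + 1 by omega, hfireT, hT0]
          rfl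
      | succ n ih =>
        show fire m _ _ = _
        rw [ih]
        by_cases h1 : n + 1 < T
        · have h2 : n < T := by omega
          simp only [h2, if_true, h1, if_true]
          rw [fire_add_const]
          rfl
        · by_cases h2 : n < T
          · have h3 : n + 1 = T := by omega
            simp only [h2, if_true, h1, if_false]
            rw [fire_add_const]
            show gameState m x s (n+1) + D = _
            rw [h3, hfireT, ← h3]
          · simp only [h2, if_false, h1, if_false]
            rfl
    intro n
    have hst := hclaim n
    by_cases h2 : n < T
    · have hne : s n ≠ w0 := Nat.find_min hT h2
      simp only [h2, if_true] at hst ⊢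
      rw [hst]
      have hpos : 0 ≤ D (s n) := lap_single_nonneg m w0 (s n) hne
      have := hs n
      simp only [Pi.add_apply]
      omega
    · simp only [h2, if_false] at hst ⊢
      rw [hst]
      exact hs (n+1)
  · push_neg at hT
    refine ⟨s, ?_⟩
    intro n
    have hst : gameState m (x + D) s n = gameState m x s n + D :=
      gameState_add_const m x D s n
    rw [hst]
    have hpos : 0 ≤ D (s n) := lap_single_nonneg m w0 (s n) (hT n)
    have := hs n
    simp only [Pi.add_apply]
    omega

lemma nonterm_add_lap_nat (x : V → ℤ) (z : V → ℕ) (h : ¬ Terminating m x) :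
    ¬ Terminating m (x + lap m (fun v => (z v : ℤ))) := by
  suffices H : ∀ (n : ℕ) (x : V → ℤ) (z : V → ℕ), (∑ v, z v) = n → ¬ Terminating m x →
      ¬ Terminating m (x + lap m (fun v => (z v : ℤ))) from H _ x z rfl h
  clear h z x
  intro n
  induction n with
  | zero =>
    intro x z hn h
    have hz : ∀ v, z v = 0 := by
      intro v
      have := Finset.sum_eq_zero_iff.1 hn v (Finset.mem_univ v)
      exact this
    have : (fun v => (z v : ℤ)) = (fun _ => (0:ℤ)) := by funext v; rw [hz v]; rfl
    rw [this, lap_zero]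
    have hx : x + (fun (_:V) => (0:ℤ)) = x := by funext u; simp
    rwa [hx]
  | succ n ih =>
    intro x z hn h
    have hex : ∃ w0, z w0 ≠ 0 := by
      by_contra hc
      push_neg at hc
      simp [hc] at hn
    obtain ⟨w0, hw0⟩ := hex
    set z' : V → ℕ := fun v => if v = w0 then z v - 1 else z v with hz'
    have hsplit : (fun v => (z v : ℤ))
        = (fun v => (z' v : ℤ)) + (fun t => if t = w0 then (1:ℤ) else 0) := by
      funext v
      by_cases hv : v = w0 <;> simp [hz', hv] <;> omega
    have hsum : ∑ v, z' v = n := by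
      have e1 : ∑ v, z v = z w0 + ∑ v ∈ Finset.univ.erase w0, z v :=
        (Finset.add_sum_erase _ _ (Finset.mem_univ w0)).symm
      have e2 : ∑ v, z' v = z' w0 + ∑ v ∈ Finset.univ.erase w0, z' v :=
        (Finset.add_sum_erase _ _ (Finset.mem_univ w0)).symm
      have h3 : ∑ v ∈ Finset.univ.erase w0, z' v = ∑ v ∈ Finset.univ.erase w0, z v :=
        Finset.sum_congr rfl (fun v hv => by
          simp [hz', (Finset.mem_erase.1 hv).1])
      have h4 : z' w0 = z w0 - 1 := by simp [hz']
      omega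
    have step1 := ih x z' hsum h
    have step2 := nonterm_add_lap_single m _ w0 step1
    rw [hsplit, lap_add, ← add_assoc]
    exact step2

lemma nonterm_add_lap (heul : ∀ v, outdeg m v = indeg m v) (x : V → ℤ) (z : V → ℤ)
    (h : ¬ Terminating m x) : ¬ Terminating m (x + lap m z) := by
  set k : ℕ := Finset.univ.sup (fun v => (-z v).toNat) with hk
  have hge : ∀ v, 0 ≤ z v + (k:ℤ) := by
    intro v
    have h1 : (-z v).toNat ≤ k := Finset.le_sup (f := fun v => (-z v).toNat) (Finset.mem_univ v)
    have h2 : -z v ≤ ((-z v).toNat : ℤ) := Int.self_le_toNat _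
    omega
  have hlapeq : lap m (fun v => (((z v + k).toNat : ℕ) : ℤ)) = lap m z := by
    have h1 : (fun v => (((z v + k).toNat : ℕ) : ℤ)) = (fun v => z v + (k:ℤ)) := by
      funext v; exact Int.toNat_of_nonneg (hge v)
    rw [h1]
    exact lap_shift m heul z k
  have := nonterm_add_lap_nat m x (fun v => (z v + k).toNat) h
  rwa [hlapeq] at this

lemma nonterm_lap_iff (heul : ∀ v, outdeg m v = indeg m v) (x : V → ℤ) (z : V → ℤ) :
    ¬ Terminating m (x + lap m z) ↔ ¬ Terminating m x := by
  constructor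
  · intro h
    have := nonterm_add_lap m heul _ (-z) h
    rw [lap_neg, add_assoc] at this
    simpa using this
  · exact nonterm_add_lap m heul x z

def IsMaxPlay (w : V → ℤ) (l : List V) : Prop :=
  LegalList m w l ∧ l.Nodup ∧ ∀ u, u ∉ l → applyList m w l u < outdeg m u

lemma maxPlay_extend (w : V → ℤ) :
    ∀ (k : ℕ) (l : List V), LegalList m w l → l.Nodup → Fintype.card V ≤ l.length + k →
    ∃ e : List V, IsMaxPlay m w (l ++ e) := by
  intro k
  induction k with
  | zero =>
    intro l hleg hn hcard
    refine ⟨[], ?_⟩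
    rw [List.append_nil]
    have hlen : l.length = Fintype.card V :=
      le_antisymm (List.Nodup.length_le_card hn) (by omega)
    have hfull : ∀ u : V, u ∈ l := by
      have h1 : l.toFinset.card = Fintype.card V := by
        rw [List.toFinset_card_of_nodup hn, hlen]
      have h2 : l.toFinset = Finset.univ := Finset.eq_univ_of_card _ h1
      intro u
      have : u ∈ l.toFinset := h2 ▸ Finset.mem_univ u
      simpa using this
    exact ⟨hleg, hn, fun u hu => absurd (hfull u) hu⟩
  | succ k ih =>
    intro l hleg hn hcard
    by_cases hx : ∃ u, u ∉ l ∧ outdeg m u ≤ applyList m w l u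
    · obtain ⟨u, hu, hfire⟩ := hx
      have hleg' : LegalList m w (l ++ [u]) := by
        rw [legalList_append]
        exact ⟨hleg, hfire, trivial⟩
      have hn' : (l ++ [u]).Nodup := by
        rw [List.nodup_append]
        exact ⟨hn, List.nodup_singleton u, by
          intro a ha b hb hab
          simp only [List.mem_singleton] at hb
          subst hab; subst hb
          exact hu ha⟩
      have hcard' : Fintype.card V ≤ (l ++ [u]).length + k := by
        simp only [List.length_append, List.length_singleton]; omega
      obtain ⟨e, he⟩ := ih (l ++ [u]) hleg' hn' hcard'
      exact ⟨[u] ++ e, by rwa [← List.append_assoc]⟩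
    · push_neg at hx
      refine ⟨[], ?_⟩
      rw [List.append_nil]
      exact ⟨hleg, hn, fun u hu => hx u hu⟩

lemma exists_maxPlay (w : V → ℤ) (v : V) (hv : outdeg m v ≤ w v) :
    ∃ l, IsMaxPlay m w l ∧ l ≠ [] := by
  have hleg : LegalList m w [v] := ⟨hv, trivial⟩
  obtain ⟨e, he⟩ := maxPlay_extend m w (Fintype.card V) [v] hleg (List.nodup_singleton v)
    (by simp)
  exact ⟨[v] ++ e, he, by simp⟩

open Classical in
noncomputable def mp (w : V → ℤ) : List V :=
  if h : ∃ l, IsMaxPlay m w l ∧ l ≠ [] then h.choose else []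

lemma mp_spec (w : V → ℤ) (h : ¬ Terminating m w) :
    IsMaxPlay m w (mp m w) ∧ mp m w ≠ [] := by
  rw [Terminating, not_not] at h
  obtain ⟨s, hs⟩ := h
  have h0 : outdeg m (s 0) ≤ w (s 0) := hs 0
  have hex := exists_maxPlay m w (s 0) h0
  classical
  rw [mp, dif_pos hex]
  exact hex.choose_spec

noncomputable def pstep : (V → ℤ) → (V → ℤ) := fun w => applyList m w (mp m w)

noncomputable def pseq (x : V → ℤ) (i : ℕ) : V → ℤ := (pstep m)^[i] x

lemma pseq_zero (x : V → ℤ) : pseq m x 0 = x := rfl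
lemma pseq_succ (x : V → ℤ) (i : ℕ) :
    pseq m x (i+1) = applyList m (pseq m x i) (mp m (pseq m x i)) := by
  rw [pseq, Function.iterate_succ_apply']; rfl

lemma pseq_add (x : V → ℤ) (a b : ℕ) : pseq m x (a + b) = (pstep m)^[b] (pseq m x a) := by
  rw [pseq, pseq, Nat.add_comm, Function.iterate_add_apply]

lemma pseq_lin (x : V → ℤ) (i : ℕ) : ∃ z : V → ℤ, pseq m x i = x + lap m z := by
  induction i with
  | zero =>
    refine ⟨fun _ => 0, ?_⟩
    rw [pseq_zero, lap_zero]
    funext u; simp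
  | succ i ih =>
    obtain ⟨z, hz⟩ := ih
    refine ⟨z + fun v => ((mp m (pseq m x i)).count v : ℤ), ?_⟩
    rw [pseq_succ, applyList_eq_add_lap, hz, lap_add, add_assoc]

lemma pseq_nonterm (heul : ∀ v, outdeg m v = indeg m v) (x : V → ℤ)
    (hx : ¬ Terminating m x) (i : ℕ) : ¬ Terminating m (pseq m x i) := by
  obtain ⟨z, hz⟩ := pseq_lin m x i
  rw [hz]
  exact nonterm_add_lap m heul x z hx

/-- the key structural lemma: a non-terminating state is equivalent to one
dominating a full-round configuration -/
lemma char_fwd [Nonempty V] (hloop : Loopless m) (hconn : StronglyConnected m)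
    (heul : ∀ v, outdeg m v = indeg m v) (x : V → ℤ) (hx : ¬ Terminating m x) :
    ∃ (z : V → ℤ) (l : List V), l.Nodup ∧ (∀ v : V, v ∈ l) ∧
      ∀ v, cList m l v ≤ (x + lap m z) v := by
  by_contra hcon
  -- basic facts about the process
  have hNT : ∀ i, ¬ Terminating m (pseq m x i) := pseq_nonterm m heul x hx
  have hMP : ∀ i, IsMaxPlay m (pseq m x i) (mp m (pseq m x i)) ∧ mp m (pseq m x i) ≠ [] :=
    fun i => mp_spec m _ (hNT i)
  -- every play misses a vertex
  have hmiss : ∀ i, ∃ u, u ∉ mp m (pseq m x i) := by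
    intro i
    by_contra hall
    push_neg at hall
    obtain ⟨z, hz⟩ := pseq_lin m x i
    refine hcon ⟨z, mp m (pseq m x i), (hMP i).1.2.1, hall, ?_⟩
    intro v
    rw [← hz]
    exact cList_le_of_legal m _ _ v (hMP i).1.1 (hMP i).1.2.1 (hall v)
  -- step facts
  have hB1 : ∀ i u, u ∈ mp m (pseq m x i) → pseq m x (i+1) u ≤ pseq m x i u := by
    intro i u hu
    rw [pseq_succ]
    exact applyList_mem_le m hloop heul _ _ u (hMP i).1.2.1 hu
  have hB2 : ∀ i u, u ∈ mp m (pseq m x i) →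
      pseq m x (i+1) u = pseq m x i u
        - ∑ v ∈ Finset.univ \ (mp m (pseq m x i)).toFinset, (m v u : ℤ) := by
    intro i u hu
    rw [pseq_succ]
    exact applyList_mem_eulerian m hloop heul _ _ u (hMP i).1.2.1 hu
  have hB3 : ∀ i u, u ∉ mp m (pseq m x i) →
      pseq m x i u ≤ pseq m x (i+1) u ∧ pseq m x (i+1) u ≤ outdeg m u - 1 := by
    intro i u hu
    rw [pseq_succ]
    constructor
    · rw [applyList_not_mem m _ _ _ hu]
      have := recvSum_nonneg m (mp m (pseq m x i)) u
      omega
    · have := (hMP i).1.2.2 u hu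
      omega
  have hB4 : ∀ i u, u ∈ mp m (pseq m x i) → 0 ≤ pseq m x (i+1) u := by
    intro i u hu
    rw [pseq_succ]
    exact applyList_mem_nonneg m hloop _ _ u (hMP i).1.1 (hMP i).1.2.1 hu
  have hB5 : ∀ i, ∃ h0, h0 ∈ mp m (pseq m x i) ∧ outdeg m h0 ≤ pseq m x i h0 := by
    intro i
    obtain ⟨hmp, hne⟩ := hMP i
    rcases hl : mp m (pseq m x i) with _ | ⟨h0, t⟩
    · exact absurd hl hne
    · refine ⟨h0, by simp [hl], ?_⟩
      have := hmp.1
      rw [hl] at this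
      exact this.1
  -- boundedness
  have hbound : ∀ i u, min (x u) 0 ≤ pseq m x i u ∧
      pseq m x i u ≤ max (x u) (outdeg m u - 1) := by
    intro i
    induction i with
    | zero =>
      intro u
      rw [pseq_zero]
      constructor
      · exact min_le_left _ _
      · exact le_max_left _ _
    | succ i ih =>
      intro u
      by_cases hu : u ∈ mp m (pseq m x i)
      · have h1 := hB1 i u hu
        have h4 := hB4 i u hu
        have := (ih u).2
        constructor
        · have : (0:ℤ) ≥ min (x u) 0 := min_le_right _ _
          omega
        · omega
      · have h3 := hB3 i u hu
        have := (ih u).1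
        constructor
        · omega
        · have : outdeg m u - 1 ≤ max (x u) (outdeg m u - 1) := le_max_right _ _
          omega
  -- pigeonhole: two equal states
  have hfin : (Set.pi Set.univ (fun u => Set.Icc (min (x u) 0) (max (x u) (outdeg m u - 1)))).Finite :=
    Set.Finite.pi (fun u => Set.finite_Icc _ _)
  have hmem : ∀ i, pseq m x i ∈ Set.pi Set.univ (fun u => Set.Icc (min (x u) 0) (max (x u) (outdeg m u - 1))) :=
    fun i u _ => ⟨(hbound i u).1, (hbound i u).2⟩
  obtain ⟨i, j, hij, heq⟩ : ∃ i j : ℕ, i ≠ j ∧ pseq m x i = pseq m x j := by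
    haveI := hfin.to_subtype
    obtain ⟨i, j, hij, heq⟩ := Finite.exists_ne_map_eq_of_infinite
      (fun i : ℕ => (⟨pseq m x i, hmem i⟩ : (Set.pi Set.univ (fun u => Set.Icc (min (x u) 0) (max (x u) (outdeg m u - 1))))))
    exact ⟨i, j, hij, by simpa using congrArg Subtype.val heq⟩
  wlog hlt : i < j generalizing i j
  · exact this j i hij.symm heq.symm (by omega)
  set i0 := i with hi0
  set p := j - i with hp
  have hp1 : 1 ≤ p := by omega
  have hper0 : pseq m x (i0 + p) = pseq m x i0 := by
    rw [show i0 + p = j by omega]; exact heq.symm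
  have hper : ∀ k, pseq m x (i0 + k + p) = pseq m x (i0 + k) := by
    intro k
    have h1 : pseq m x (i0 + k + p) = (pstep m)^[k] (pseq m x (i0 + p)) := by
      rw [show i0 + k + p = (i0 + p) + k by omega, pseq_add]
    rw [h1, hper0, ← pseq_add]
  -- the "outside decay" lemma
  have hdecay : ∀ k u, u ∉ mp m (pseq m x k) → ∀ t, pseq m x (k + 1 + t) u ≤ outdeg m u - 1 := by
    intro k u hu t
    induction t with
    | zero => exact (hB3 k u hu).2
    | succ t ih =>
      by_cases hu2 : u ∈ mp m (pseq m x (k + 1 + t))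
      · have := hB1 (k+1+t) u hu2
        rw [show k + 1 + (t+1) = (k+1+t) + 1 by omega]
        omega
      · have := (hB3 (k+1+t) u hu2).2
        rw [show k + 1 + (t+1) = (k+1+t) + 1 by omega]
        omega
  by_cases hPemp : ∀ u : V, ∃ k, i0 ≤ k ∧ u ∉ mp m (pseq m x k)
  · -- P empty: all vertices eventually below degree forever
    classical
    choose g hg1 hg2 using hPemp
    set I := (Finset.univ.sup g) + 1 with hI
    have hIu : ∀ u : V, pseq m x I u ≤ outdeg m u - 1 := by
      intro u
      have hgu : g u ≤ Finset.univ.sup g := Finset.le_sup (Finset.mem_univ u)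
      have : I = g u + 1 + (Finset.univ.sup g - g u) := by omega
      rw [this]
      exact hdecay (g u) u (hg2 u) _
    obtain ⟨h0, _, hfire⟩ := hB5 I
    have := hIu h0
    omega
  · -- P nonempty
    push_neg at hPemp
    obtain ⟨u0, hu0⟩ := hPemp
    -- for any vertex with the "always inside" property, flow into it from outside is 0
    have hflow : ∀ b : V, (∀ k, i0 ≤ k → b ∈ mp m (pseq m x k)) →
        ∀ k, i0 ≤ k → ∀ v, v ∉ mp m (pseq m x k) → m v b = 0 := by
      intro b hb
      -- monotone decreasing from i0 on
      have hmono : ∀ a c, i0 ≤ a → a ≤ c → pseq m x c b ≤ pseq m x a b := by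
        intro a c ha hac
        induction c with
        | zero =>
          have : a = 0 := by omega
          rw [this]
        | succ c ih =>
          rcases Nat.lt_or_ge a (c+1) with h1 | h2
          · have hac2 : a ≤ c := by omega
            have hi0c : i0 ≤ c := by omega
            have := hB1 c b (hb c hi0c)
            have := ih hac2
            omega
          · have : a = c + 1 := by omega
            rw [this]
      -- constant from i0 on
      have hmult : ∀ t, pseq m x (i0 + t * p) b = pseq m x i0 b := by
        intro t
        induction t with
        | zero => simp
        | succ t ih =>
          rw [show i0 + (t+1) * p = i0 + t * p + p by ring, hper (t * p), ih]
      have hconst : ∀ k, i0 ≤ k → pseq m x k b = pseq m x i0 b := by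
        intro k hk
        have hkle : k ≤ i0 + k * p := by
          have : k ≤ k * p := Nat.le_mul_of_pos_right k (by omega)
          omega
        have h1 := hmono i0 k (le_refl i0) hk
        have h2 := hmono k (i0 + k * p) hk hkle
        rw [hmult k] at h2
        omega
      intro k hk v hv
      have he1 : pseq m x (k+1) b = pseq m x k b := by
        rw [hconst k hk, hconst (k+1) (by omega)]
      have he2 := hB2 k b (hb k hk)
      have hzero : ∑ v ∈ Finset.univ \ (mp m (pseq m x k)).toFinset, (m v b : ℤ) = 0 := by
        omega
      have hvmem : v ∈ Finset.univ \ (mp m (pseq m x k)).toFinset := by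
        simp only [Finset.mem_sdiff, Finset.mem_univ, true_and, List.mem_toFinset]
        exact hv
      have := (Finset.sum_eq_zero_iff_of_nonneg
        (fun w _ => by positivity : ∀ w ∈ Finset.univ \ (mp m (pseq m x k)).toFinset, (0:ℤ) ≤ (m w b : ℤ))).1
        hzero v hvmem
      exact_mod_cast this
    -- propagate "always inside" backwards along edges
    have hprop : ∀ a : V, (∀ k, i0 ≤ k → a ∈ mp m (pseq m x k)) := by
      intro a
      have hpath := hconn a u0
      induction hpath using Relation.ReflTransGen.head_induction_on with
      | refl => exact hu0
      | head hedge _ ih =>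
        rename_i a' b' _
        by_contra hna
        push_neg at hna
        obtain ⟨k, hk, hout⟩ := hna
        have := hflow b' ih k hk a' hout
        omega
    -- so the play at i0 contains every vertex: contradiction
    obtain ⟨u, hu⟩ := hmiss i0
    exact hu (hprop u i0 (le_refl i0))

/-! ### sum identities -/

lemma sum_map_add' (l : List V) (f g : V → ℤ) :
    (l.map fun v => f v + g v).sum = (l.map f).sum + (l.map g).sum := by
  induction l with
  | nil => simp
  | cons a t ih => simp [ih]; ring

lemma sum_map_sub' (l : List V) (f g : V → ℤ) :
    (l.map fun v => f v - g v).sum = (l.map f).sum - (l.map g).sum := by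
  induction l with
  | nil => simp
  | cons a t ih => simp [ih]; ring

lemma sum_map_congr (l : List V) (f g : V → ℤ) (h : ∀ v ∈ l, f v = g v) :
    (l.map f).sum = (l.map g).sum := by
  induction l with
  | nil => simp
  | cons a t ih =>
    simp only [List.map_cons, List.sum_cons, h a (List.mem_cons_self),
      ih (fun v hv => h v (List.mem_cons_of_mem a hv))]

def spre : List V → ℤ
  | [] => 0
  | a :: t => (t.map fun v => (m a v : ℤ)).sum + spre t

def spost : List V → ℤ
  | [] => 0
  | a :: t => (t.map fun v => (m v a : ℤ)).sum + spost t

def dsum (l : List V) : ℤ := (l.map fun u => (l.map fun v => (m u v : ℤ)).sum).sum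

def listSC (l : List V) : ℤ := (l.map fun v => cList m l v).sum

lemma spre_append (l1 l2 : List V) :
    spre m (l1 ++ l2) = spre m l1 + spre m l2 + (l1.map fun u => (l2.map fun v => (m u v : ℤ)).sum).sum := by
  induction l1 with
  | nil => simp [spre]
  | cons a t ih =>
    show (List.map (fun v => (m a v : ℤ)) (t ++ l2)).sum + spre m (t ++ l2) = _
    rw [List.map_append, List.sum_append, ih]
    simp only [spre, List.map_cons, List.sum_cons]
    ring

lemma spre_reverse_eq_spost (l : List V) : spre m l.reverse = spost m l := by
  induction l with
  | nil => rfl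
  | cons a t ih =>
    rw [List.reverse_cons, spre_append, ih]
    have h0 : spre m [a] = 0 := by simp [spre]
    have h1 : (t.reverse.map fun u => (([a]:List V).map fun v => (m u v : ℤ)).sum).sum
        = (t.map fun u => (m u a : ℤ)).sum := by
      rw [List.map_reverse, List.sum_reverse]
      apply sum_map_congr
      intro v _
      simp
    rw [h0, h1]
    show spost m t + 0 + (t.map fun u => (m u a : ℤ)).sum
      = (t.map fun u => (m u a : ℤ)).sum + spost m t
    ring

lemma spre_add_spost (hloop : Loopless m) (l : List V) :
    spre m l + spost m l = dsum m l := by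
  induction l with
  | nil => rfl
  | cons a t ih =>
    have hinner : (t.map fun v => ((a :: t).map fun w => (m v w : ℤ)).sum).sum
        = (t.map fun v => (m v a : ℤ)).sum + (t.map fun v => (t.map fun w => (m v w : ℤ)).sum).sum := by
      rw [← sum_map_add']
      apply sum_map_congr
      intro v _
      simp
    show ((t.map fun v => (m a v : ℤ)).sum + spre m t) + ((t.map fun v => (m v a : ℤ)).sum + spost m t) = _
    have hd : dsum m (a :: t) = (m a a : ℤ) + (t.map fun w => (m a w : ℤ)).sum
        + ((t.map fun v => (m v a : ℤ)).sum + (t.map fun v => (t.map fun w => (m v w : ℤ)).sum).sum) := by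
      rw [dsum]
      simp only [List.map_cons, List.sum_cons]
      rw [sum_map_add']
    rw [hd, hloop a]
    rw [dsum] at ih
    push_cast
    linarith [ih]

lemma spre_eq_spost (hsym : ∀ u v, m u v = m v u) (l : List V) :
    spre m l = spost m l := by
  induction l with
  | nil => rfl
  | cons a t ih =>
    simp only [spre, spost, ih]
    have : (t.map fun v => (m a v : ℤ)).sum = (t.map fun v => (m v a : ℤ)).sum := by
      apply sum_map_congr
      intro v _
      rw [hsym a v]
    rw [this]

lemma two_spre (hloop : Loopless m) (hsym : ∀ u v, m u v = m v u) (l : List V) :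
    2 * spre m l = dsum m l := by
  have h1 := spre_add_spost m hloop l
  have h2 := spre_eq_spost m hsym l
  omega

lemma listSC_cons (a : V) (t : List V) (ha : a ∉ t) :
    listSC m (a :: t) = outdeg m a + listSC m t - (t.map fun v => (m a v : ℤ)).sum := by
  simp only [listSC, List.map_cons, List.sum_cons, cList_cons_self]
  have : (t.map fun v => cList m (a :: t) v).sum
      = (t.map fun v => cList m t v).sum - (t.map fun v => (m a v : ℤ)).sum := by
    rw [← sum_map_sub']
    apply sum_map_congr
    intro v hv
    exact cList_cons_ne m a v t (fun he => ha (he ▸ hv))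
  rw [this]
  ring

lemma listSC_eq (l : List V) (hn : l.Nodup) :
    listSC m l = (l.map fun v => outdeg m v).sum - spre m l := by
  induction l with
  | nil => simp [listSC, spre]
  | cons a t ih =>
    rw [listSC_cons m a t (List.nodup_cons.1 hn).1, ih (List.nodup_cons.1 hn).2]
    simp only [List.map_cons, List.sum_cons, spre]
    ring

lemma list_outdeg_full (l : List V) (hn : l.Nodup) (hf : ∀ v : V, v ∈ l) :
    (l.map fun v => outdeg m v).sum = ∑ u, ∑ v, (m u v : ℤ) := by
  rw [list_sum_eq_finset_sum _ hn]
  have : l.toFinset = Finset.univ := Finset.eq_univ_of_forall (fun v => by simpa using hf v)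
  rw [this]
  rfl

lemma dsum_full (l : List V) (hn : l.Nodup) (hf : ∀ v : V, v ∈ l) :
    dsum m l = ∑ u, ∑ v, (m u v : ℤ) := by
  have hfin : l.toFinset = Finset.univ := Finset.eq_univ_of_forall (fun v => by simpa using hf v)
  rw [dsum, list_sum_eq_finset_sum _ hn, hfin]
  apply Finset.sum_congr rfl
  intro u _
  rw [list_sum_eq_finset_sum _ hn, hfin]

/-- for a full enumeration in the symmetric case, the total of `cList` is half the edges -/
lemma two_listSC (hloop : Loopless m) (hsym : ∀ u v, m u v = m v u)
    (l : List V) (hn : l.Nodup) (hf : ∀ v : V, v ∈ l) :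
    2 * listSC m l = ∑ u, ∑ v, (m u v : ℤ) := by
  rw [listSC_eq m l hn, list_outdeg_full m l hn hf]
  have := two_spre m hloop hsym l
  rw [dsum_full m l hn hf] at this
  omega

lemma listSC_add_rev (hloop : Loopless m) (l : List V) (hn : l.Nodup) (hf : ∀ v : V, v ∈ l) :
    listSC m l + listSC m l.reverse = ∑ u, ∑ v, (m u v : ℤ) := by
  rw [listSC_eq m l hn, listSC_eq m l.reverse (List.nodup_reverse.2 hn),
    list_outdeg_full m l hn hf,
    list_outdeg_full m l.reverse (List.nodup_reverse.2 hn) (fun v => List.mem_reverse.2 (hf v)),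
    spre_reverse_eq_spost]
  have := spre_add_spost m hloop l
  rw [dsum_full m l hn hf] at this
  omega

lemma listSC_eq_finset (l : List V) (hn : l.Nodup) (hf : ∀ v : V, v ∈ l) :
    listSC m l = ∑ v, cList m l v := by
  rw [listSC, list_sum_eq_finset_sum _ hn,
    Finset.eq_univ_of_forall (fun v => by simpa using hf v : ∀ v : V, v ∈ l.toFinset)]

/-- reversal duality for cList (Eulerian) -/
lemma cList_reverse (hloop : Loopless m) (heul : ∀ v, outdeg m v = indeg m v)
    (l : List V) (hn : l.Nodup) (hf : ∀ v : V, v ∈ l) (v : V) :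
    cList m l.reverse v = outdeg m v - cList m l v := by
  obtain ⟨p, q, hpq⟩ := List.append_of_mem (hf v)
  have hnp : v ∉ p := by
    rw [hpq, List.nodup_append] at hn
    intro hv
    exact hn.2.2 _ hv _ List.mem_cons_self rfl
  have hnq : v ∉ q := by
    rw [hpq] at hn
    have := (List.nodup_append.1 hn).2.1
    exact (List.nodup_cons.1 this).1
  have hrev : l.reverse = q.reverse ++ v :: p.reverse := by
    rw [hpq, List.reverse_append, List.reverse_cons, List.append_assoc, List.singleton_append]
  have hprev1 : prevList l v = p := by
    rw [hpq]; exact prevList_append p q v hnp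
  have hprev2 : prevList l.reverse v = q.reverse := by
    rw [hrev]; exact prevList_append _ _ _ (fun hv => hnq (List.mem_reverse.1 hv))
  have hfullrecv : recvSum m l v = indeg m v := recvSum_full m l hn hf v
  have hsplit : recvSum m l v = recvSum m p v + recvSum m q v := by
    rw [hpq, recvSum_append, recvSum_cons, hloop v]
    push_cast
    ring
  rw [cList, cList, hprev1, hprev2, recvSum_reverse]
  have := heul v
  omega

/-! ### the distance formula and Riemann-Roch -/

def distSet (x : V → ℤ) : Set ℕ :=
  {n : ℕ | ∃ y : V → ℤ, 0 ≤ y ∧ degSum y = (n : ℤ) ∧ ¬ Terminating m (x + y)}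

def Val (x : V → ℤ) (l : List V) (z : V → ℤ) : ℤ :=
  ∑ v, max 0 (cList m l v + lap m z v - x v)

lemma Val_nonneg (x : V → ℤ) (l : List V) (z : V → ℤ) : 0 ≤ Val m x l z :=
  Finset.sum_nonneg (fun v _ => le_max_left _ _)

lemma val_mem_distSet [Nonempty V] (hloop : Loopless m)
    (heul : ∀ v, outdeg m v = indeg m v) (x : V → ℤ) (l : List V) (z : V → ℤ)
    (hn : l.Nodup) (hf : ∀ v : V, v ∈ l) :
    (Val m x l z).toNat ∈ distSet m x := by
  refine ⟨fun v => max 0 (cList m l v + lap m z v - x v), ?_, ?_, ?_⟩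
  · intro v
    exact le_max_left _ _
  · rw [Int.toNat_of_nonneg (Val_nonneg m x l z)]
    rfl
  · have key : ∀ v, cList m l v ≤ ((x + fun v => max 0 (cList m l v + lap m z v - x v)) + lap m (-z)) v := by
      intro v
      have h1 : cList m l v + lap m z v - x v ≤ max 0 (cList m l v + lap m z v - x v) :=
        le_max_right _ _
      simp only [Pi.add_apply, lap_neg, Pi.neg_apply]
      omega
    have h2 := nonterm_of_cList_le m hloop heul _ l hn hf key
    rwa [nonterm_lap_iff m heul] at h2

lemma distSet_lower [Nonempty V] (hloop : Loopless m) (hconn : StronglyConnected m)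
    (heul : ∀ v, outdeg m v = indeg m v) (x : V → ℤ) (n : ℕ) (hn : n ∈ distSet m x) :
    ∃ (l : List V) (z : V → ℤ), l.Nodup ∧ (∀ v : V, v ∈ l) ∧ Val m x l z ≤ (n : ℤ) := by
  obtain ⟨y, hy0, hydeg, hyterm⟩ := hn
  obtain ⟨z, l, hln, hlf, hle⟩ := char_fwd m hloop hconn heul (x + y) hyterm
  refine ⟨l, -z, hln, hlf, ?_⟩
  have hptwise : ∀ v, max 0 (cList m l v + lap m (-z) v - x v) ≤ y v := by
    intro v
    have h1 := hle v
    have h2 := hy0 v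
    simp only [Pi.add_apply, Pi.zero_apply] at h1 h2 ⊢
    rw [lap_neg]
    simp only [Pi.neg_apply]
    omega
  calc Val m x l (-z) ≤ ∑ v, y v := Finset.sum_le_sum (fun v _ => hptwise v)
    _ = (n : ℤ) := hydeg

lemma chipDist_le_val [Nonempty V] (hloop : Loopless m)
    (heul : ∀ v, outdeg m v = indeg m v) (x : V → ℤ) (l : List V) (z : V → ℤ)
    (hn : l.Nodup) (hf : ∀ v : V, v ∈ l) :
    (chipDist m x : ℤ) ≤ Val m x l z := by
  have h1 : chipDist m x ≤ (Val m x l z).toNat :=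
    Nat.sInf_le (val_mem_distSet m hloop heul x l z hn hf)
  have h2 : ((Val m x l z).toNat : ℤ) = Val m x l z := Int.toNat_of_nonneg (Val_nonneg m x l z)
  omega

/-- the canonical enumeration -/
noncomputable def l0 : List V := Finset.univ.toList
lemma l0_nodup : (l0 (V := V)).Nodup := Finset.nodup_toList _
lemma l0_full : ∀ v : V, v ∈ l0 (V := V) := fun v => (Finset.mem_toList).2 (Finset.mem_univ v)

lemma listSC_const (hloop : Loopless m) (hsym : ∀ u v, m u v = m v u)
    (l : List V) (hn : l.Nodup) (hf : ∀ v : V, v ∈ l) :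
    listSC m l = listSC m (l0 (V := V)) := by
  have h1 := two_listSC m hloop hsym l hn hf
  have h2 := two_listSC m hloop hsym (l0 (V := V)) l0_nodup l0_full
  omega

lemma val_dual (hloop : Loopless m) (heul : ∀ v, outdeg m v = indeg m v)
    (x : V → ℤ) (l : List V) (z : V → ℤ) (hn : l.Nodup) (hf : ∀ v : V, v ∈ l) :
    Val m (fun v => outdeg m v - x v) l.reverse (-z)
      = Val m x l z - (listSC m l - degSum x) := by
  have hterm : ∀ v, cList m l.reverse v + lap m (-z) v - (outdeg m v - x v)
      = -(cList m l v + lap m z v - x v) := by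
    intro v
    rw [cList_reverse m hloop heul l hn hf v, lap_neg]
    simp only [Pi.neg_apply]
    ring
  have hmax : ∀ v, max 0 (cList m l.reverse v + lap m (-z) v - (outdeg m v - x v))
      = max 0 (cList m l v + lap m z v - x v) - (cList m l v + lap m z v - x v) := by
    intro v
    rw [hterm v]
    rcases le_or_gt (cList m l v + lap m z v - x v) 0 with h | h
    · rw [max_eq_right (by omega), max_eq_left h]
      omega
    · rw [max_eq_left (by omega), max_eq_right (by omega)]
      omega
  rw [Val]
  calc ∑ v, max 0 (cList m l.reverse v + lap m (-z) v - (fun v => outdeg m v - x v) v)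
      = ∑ v, (max 0 (cList m l v + lap m z v - x v) - (cList m l v + lap m z v - x v)) := by
        apply Finset.sum_congr rfl
        intro v _
        exact hmax v
    _ = Val m x l z - (listSC m l - degSum x) := by
        rw [Finset.sum_sub_distrib]
        have : ∑ v, (cList m l v + lap m z v - x v)
            = listSC m l + (∑ v, lap m z v) - degSum x := by
          rw [listSC_eq_finset m l hn hf, degSum]
          rw [Finset.sum_sub_distrib, Finset.sum_add_distrib]
        rw [this, sum_lap, Val]
        ring

lemma half_rr [Nonempty V] (hloop : Loopless m) (hconn : StronglyConnected m)
    (heul : ∀ v, outdeg m v = indeg m v) (hsym : ∀ u v, m u v = m v u) (x : V → ℤ) :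
    (chipDist m (fun v => outdeg m v - x v) : ℤ)
      ≤ (chipDist m x : ℤ) - listSC m (l0 (V := V)) + degSum x := by
  have hne : (distSet m x).Nonempty :=
    ⟨_, val_mem_distSet m hloop heul x (l0 (V := V)) 0 l0_nodup l0_full⟩
  have hmem : (chipDist m x) ∈ distSet m x := Nat.sInf_mem hne
  obtain ⟨l, z, hln, hlf, hval⟩ := distSet_lower m hloop hconn heul x _ hmem
  have hdual := val_dual m hloop heul x l z hln hlf
  have hle2 := chipDist_le_val m hloop heul (fun v => outdeg m v - x v) l.reverse (-z)
    (List.nodup_reverse.2 hln) (fun v => List.mem_reverse.2 (hlf v))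
  have hSCc := listSC_const m hloop hsym l hln hlf
  omega

lemma rr_int [Nonempty V] (hloop : Loopless m) (hconn : StronglyConnected m)
    (heul : ∀ v, outdeg m v = indeg m v) (hsym : ∀ u v, m u v = m v u) (x : V → ℤ) :
    (chipDist m x : ℤ) - (chipDist m (fun v => outdeg m v - x v) : ℤ)
      = listSC m (l0 (V := V)) - degSum x := by
  have hA := half_rr m hloop hconn heul hsym x
  have hB := half_rr m hloop hconn heul hsym (fun v => outdeg m v - x v)
  have hxx : (fun v => outdeg m v - (fun v => outdeg m v - x v) v) = x := by
    funext v; ring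
  rw [hxx] at hB
  have hdeg : degSum (fun v => outdeg m v - x v) = (∑ u, ∑ v, (m u v : ℤ)) - degSum x := by
    rw [degSum, degSum, Finset.sum_sub_distrib]
    congr 1
  have h2SC := two_listSC m hloop hsym (l0 (V := V)) l0_nodup l0_full
  omega

lemma chipDist_cList_zero [Nonempty V] (hloop : Loopless m)
    (heul : ∀ v, outdeg m v = indeg m v) (l : List V) (hn : l.Nodup) (hf : ∀ v : V, v ∈ l) :
    chipDist m (cList m l) = 0 := by
  have h0 : (0:ℕ) ∈ {n : ℕ | ∃ y : V → ℤ, 0 ≤ y ∧ degSum y = (n : ℤ) ∧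
      ¬ Terminating m (cList m l + y)} := by
    refine ⟨0, le_refl 0, by simp [degSum], ?_⟩
    have : cList m l + (0 : V → ℤ) = cList m l := by funext v; simp
    rw [this]
    exact nonterm_of_cList_le m hloop heul _ l hn hf (fun v => le_refl _)
  exact Nat.sInf_eq_zero.2 (Or.inl h0)

lemma rr_forward [Nonempty V] (hloop : Loopless m) (hconn : StronglyConnected m)
    (heul : ∀ v, outdeg m v = indeg m v)
    (hRR : ∀ x : V → ℤ, (chipDist m x : ℚ) - (chipDist m (fun v => outdeg m v - x v) : ℚ)
        = (∑ u, ∑ v, (m u v : ℚ)) / 2 - (degSum x : ℚ)) :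
    ∀ u v : V, m u v = m v u := by
  -- step 1: every full enumeration has listSC = E/2
  have hEQ : (∑ u, ∑ v, (m u v : ℚ)) = ((∑ u, ∑ v, (m u v : ℤ) : ℤ) : ℚ) := by
    push_cast
    rfl
  have hSC : ∀ l : List V, l.Nodup → (∀ v : V, v ∈ l) →
      ((listSC m l : ℤ) : ℚ) ≥ (∑ u, ∑ v, (m u v : ℚ)) / 2 := by
    intro l hn hf
    have h0 := chipDist_cList_zero m hloop heul l hn hf
    have := hRR (cList m l)
    rw [h0] at this
    have hdeg : degSum (cList m l) = listSC m l := (listSC_eq_finset m l hn hf).symm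
    rw [hdeg] at this
    have hnn : (0:ℚ) ≤ (chipDist m (fun v => outdeg m v - cList m l v) : ℚ) := by positivity
    push_cast at this ⊢
    linarith
  have hSCeq : ∀ l : List V, l.Nodup → (∀ v : V, v ∈ l) →
      ((listSC m l : ℤ) : ℚ) = (∑ u, ∑ v, (m u v : ℚ)) / 2 := by
    intro l hn hf
    have h1 := hSC l hn hf
    have h2 := hSC l.reverse (List.nodup_reverse.2 hn) (fun v => List.mem_reverse.2 (hf v))
    have h3 := listSC_add_rev m hloop l hn hf
    have h4 : ((listSC m l : ℤ) : ℚ) + ((listSC m l.reverse : ℤ) : ℚ) = (∑ u, ∑ v, (m u v : ℚ)) := by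
      rw [hEQ]
      push_cast
      exact_mod_cast congrArg (fun t : ℤ => (t : ℚ)) h3
    linarith
  -- step 2: compare two adjacent transposed enumerations
  intro u v
  rcases eq_or_ne u v with rfl | huv
  · rfl
  set r : List V := ((Finset.univ.erase u).erase v).toList with hr
  have hrn : r.Nodup := Finset.nodup_toList _
  have hur : u ∉ r := by
    intro hu
    rw [hr] at hu
    have := Finset.mem_toList.1 hu
    exact (Finset.mem_erase.1 (Finset.mem_of_mem_erase this)).1 rfl
  have hvr : v ∉ r := by
    intro hv
    rw [hr] at hv
    have := Finset.mem_toList.1 hv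
    exact (Finset.mem_erase.1 this).1 rfl
  have hl1n : (u :: v :: r).Nodup := by
    rw [List.nodup_cons, List.nodup_cons]
    refine ⟨?_, hvr, hrn⟩
    intro hu
    rcases List.mem_cons.1 hu with he | hm
    · exact huv he
    · exact hur hm
  have hl2n : (v :: u :: r).Nodup := by
    rw [List.nodup_cons, List.nodup_cons]
    refine ⟨?_, hur, hrn⟩
    intro hv
    rcases List.mem_cons.1 hv with he | hm
    · exact huv he.symm
    · exact hvr hm
  have hfull : ∀ w : V, w ∈ (u :: v :: r) := by
    intro w
    rcases eq_or_ne w u with rfl | hwu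
    · exact List.mem_cons_self
    rcases eq_or_ne w v with rfl | hwv
    · exact List.mem_cons_of_mem _ (List.mem_cons_self)
    refine List.mem_cons_of_mem _ (List.mem_cons_of_mem _ ?_)
    rw [hr]
    exact Finset.mem_toList.2 (Finset.mem_erase.2 ⟨hwv, Finset.mem_erase.2 ⟨hwu, Finset.mem_univ w⟩⟩)
  have hfull2 : ∀ w : V, w ∈ (v :: u :: r) := by
    intro w
    have := hfull w
    rcases List.mem_cons.1 this with he | hm
    · exact he ▸ List.mem_cons_of_mem _ (List.mem_cons_self)
    rcases List.mem_cons.1 hm with he | hm2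
    · exact he ▸ List.mem_cons_self
    · exact List.mem_cons_of_mem _ (List.mem_cons_of_mem _ hm2)
  have hq1 := hSCeq (u :: v :: r) hl1n hfull
  have hq2 := hSCeq (v :: u :: r) hl2n hfull2
  have hZ : listSC m (u :: v :: r) = listSC m (v :: u :: r) := by
    have := hq1.trans hq2.symm
    exact_mod_cast this
  have hout : ((u :: v :: r).map fun w => outdeg m w).sum = ((v :: u :: r).map fun w => outdeg m w).sum := by
    rw [list_outdeg_full m _ hl1n hfull, list_outdeg_full m _ hl2n hfull2]
  have hpre1 : spre m (u :: v :: r) = (m u v : ℤ) + (r.map fun w => (m u w : ℤ)).sum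
      + ((r.map fun w => (m v w : ℤ)).sum + spre m r) := by
    simp only [spre, List.map_cons, List.sum_cons]
  have hpre2 : spre m (v :: u :: r) = (m v u : ℤ) + (r.map fun w => (m v w : ℤ)).sum
      + ((r.map fun w => (m u w : ℤ)).sum + spre m r) := by
    simp only [spre, List.map_cons, List.sum_cons]
  have he1 := listSC_eq m (u :: v :: r) hl1n
  have he2 := listSC_eq m (v :: u :: r) hl2n
  have : (m u v : ℤ) = (m v u : ℤ) := by omega
  exact_mod_cast this

end RRAux

/-- A strongly connected Eulerian digraph has the natural Riemann–Roch property, i.e.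
`dist(x) - dist(d⁺ - x) = |E(G)|/2 - deg(x)` for every chip-distribution `x`,
if and only if it is bidirected. -/
theorem natural_riemann_roch_iff_bidirected
    {V : Type} [Fintype V] [DecidableEq V] [Nonempty V]
    (m : V → V → ℕ) (hloop : Loopless m) (hconn : StronglyConnected m)
    (heul : ∀ v, outdeg m v = indeg m v) :
    (∀ x : V → ℤ, (chipDist m x : ℚ) - (chipDist m (fun v => outdeg m v - x v) : ℚ)
        = (∑ u, ∑ v, (m u v : ℚ)) / 2 - (degSum x : ℚ))
    ↔ ∀ u v : V, m u v = m v u := by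
  constructor
  · exact RRAux.rr_forward m hloop hconn heul
  · intro hsym x
    have hint := RRAux.rr_int m hloop hconn heul hsym x
    have h2SC := RRAux.two_listSC m hloop hsym (RRAux.l0 (V := V)) RRAux.l0_nodup RRAux.l0_full
    have hcast : ((chipDist m x : ℤ) : ℚ) - ((chipDist m (fun v => outdeg m v - x v) : ℤ) : ℚ)
        = ((RRAux.listSC m (RRAux.l0 (V := V)) : ℤ) : ℚ) - ((degSum x : ℤ) : ℚ) := by
      exact_mod_cast congrArg (fun t : ℤ => (t : ℚ)) hint
    have hcast2 : 2 * ((RRAux.listSC m (RRAux.l0 (V := V)) : ℤ) : ℚ) = (∑ u, ∑ v, (m u v : ℚ)) := by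
      have : ((2 * RRAux.listSC m (RRAux.l0 (V := V)) : ℤ) : ℚ) = ((∑ u, ∑ v, (m u v : ℤ) : ℤ) : ℚ) :=
        congrArg (fun t : ℤ => (t : ℚ)) h2SC
      push_cast at this ⊢
      linarith
    push_cast at hcast
    push_cast
    linarith
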